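/- Any ideal straight 3-simplex in hyperbolic 3-space has volume at most V₃, where V₃ is the volume of the regular ideal simplex; formulated via the Lobachevsky function: for dihedral angles α, β, γ ≥ 0 with α + β + γ = π, Λ(α) + Λ(β) + Λ(γ) ≤ 3Λ(π/3), where Λ(θ) = −∫₀^θ log|2 sin t| dt. -/

import Mathlib

open Real

/-- The Lobachevsky function `Λ(θ) = -∫₀^θ log |2 sin t| dt`. -/
noncomputable def lobachevsky (θ : ℝ) : ℝ := -∫ t in (0:ℝ)..θ, Real.log |2 * Real.sin t|

namespace LobAux

open MeasureTheory Set intervalIntegral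

noncomputable def f (t : ℝ) : ℝ := Real.log |2 * Real.sin t|

lemma f_meas : Measurable f :=
  Real.measurable_log.comp (continuous_abs.comp (continuous_const.mul Real.continuous_sin)).measurable

lemma integrableOn_log_Ioc01 : IntegrableOn Real.log (Set.Ioc (0:ℝ) 1) := by
  have h : IntegrableOn (fun x => -Real.log x) (Set.Ioc (0:ℝ) 1) := by
    apply integrableOn_deriv_of_nonneg (g := fun x : ℝ => x - x * Real.log x)
    · exact (continuous_id.sub Real.continuous_mul_log).continuousOn
    · intro x hx
      have h1 := Real.hasDerivAt_mul_log (ne_of_gt hx.1)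
      have h2 : HasDerivAt (fun x : ℝ => x - x * Real.log x) (1 - (Real.log x + 1)) x :=
        (hasDerivAt_id x).sub h1
      convert h2 using 1; ring
    · intro x hx
      simp only [neg_nonneg]
      exact Real.log_nonpos hx.1.le hx.2.le
  exact h.neg.congr (Filter.Eventually.of_forall (fun x => by simp))

lemma integrableOn_bound :
    IntegrableOn (fun t => Real.log 2 + |Real.log t|) (Set.Ioc (0:ℝ) (π/2)) := by
  have h1 : IntegrableOn (fun t => Real.log 2 + |Real.log t|) (Set.Ioc (0:ℝ) 1) :=
    (integrableOn_const (by simp)).add integrableOn_log_Ioc01.abs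
  have h2 : IntegrableOn (fun t => Real.log 2 + |Real.log t|) (Set.Ioc (1:ℝ) (π/2)) := by
    have hc : ContinuousOn (fun t : ℝ => Real.log 2 + |Real.log t|) (Set.Icc 1 (π/2)) := by
      refine continuousOn_const.add (ContinuousOn.abs ?_)
      exact Real.continuousOn_log.mono (fun x hx => by
        simp only [Set.mem_compl_iff, Set.mem_singleton_iff]
        intro h0; rw [h0] at hx; exact absurd hx.1 (by norm_num))
    exact (hc.integrableOn_Icc).mono_set Set.Ioc_subset_Icc_self
  have : Set.Ioc (0:ℝ) 1 ∪ Set.Ioc (1:ℝ) (π/2) = Set.Ioc (0:ℝ) (π/2) :=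
    Set.Ioc_union_Ioc_eq_Ioc (by norm_num) (by linarith [Real.pi_gt_three])
  rw [← this]
  exact h1.union h2

lemma II_0_pihalf : IntervalIntegrable f volume 0 (π/2) := by
  have hle : (0:ℝ) ≤ π/2 := by positivity
  rw [intervalIntegrable_iff_integrableOn_Ioc_of_le hle]
  apply Integrable.mono' integrableOn_bound (f_meas.aestronglyMeasurable.restrict)
  filter_upwards [ae_restrict_mem measurableSet_Ioc] with t ht
  have ht0 : 0 < t := ht.1
  have ht2 : t ≤ π/2 := ht.2
  have hs : 0 < Real.sin t := Real.sin_pos_of_pos_of_lt_pi ht0 (by linarith [Real.pi_gt_three])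
  have habs : |2 * Real.sin t| = 2 * Real.sin t := abs_of_pos (by linarith)
  have hup : Real.log |2 * Real.sin t| ≤ Real.log 2 := by
    rw [habs]
    exact Real.log_le_log (by linarith) (by nlinarith [Real.sin_le_one t])
  have hlo : Real.log t ≤ Real.log |2 * Real.sin t| := by
    rw [habs]
    have hj : 2/π * t ≤ Real.sin t := Real.mul_le_sin ht0.le ht2
    have hpi : π ≤ 4 := Real.pi_le_four
    have ht4 : t ≤ 2 * Real.sin t := by
      have h5 : π * (2/π * t) = 2 * t := by field_simp
      nlinarith [mul_le_mul_of_nonneg_left hj Real.pi_pos.le, hs.le]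
    exact Real.log_le_log ht0 ht4
  show ‖f t‖ ≤ Real.log 2 + |Real.log t|
  rw [Real.norm_eq_abs, abs_le]
  have hl2 : (0:ℝ) ≤ Real.log 2 := Real.log_nonneg (by norm_num)
  constructor
  · have := neg_abs_le (Real.log t)
    unfold f; linarith
  · have := le_abs_self (Real.log t)
    unfold f; linarith [abs_nonneg (Real.log t)]

lemma f_neg (x : ℝ) : f (-x) = f x := by
  unfold f; rw [Real.sin_neg, mul_neg, abs_neg]

lemma II_neg_pihalf : IntervalIntegrable f volume (-(π/2)) (π/2) := by
  have h1 : IntervalIntegrable f volume (-(π/2)) 0 := by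
    have h := (IntervalIntegrable.iff_comp_neg (by simp)).mp II_0_pihalf
    simp only [f_neg] at h
    simpa using h.symm
  exact h1.trans II_0_pihalf

lemma f_sub_int (x : ℝ) (k : ℤ) : f (x - k * π) = f x := by
  unfold f
  rw [Real.sin_sub, Real.sin_int_mul_pi, mul_zero, sub_zero]
  have : |2 * (Real.sin x * Real.cos (k * π))| = |2 * Real.sin x| * |Real.cos ((k:ℝ) * π)| := by
    rw [← abs_mul]; ring_nf
  rw [this, Real.abs_cos_int_mul_pi, mul_one]

lemma II_period (k : ℤ) :
    IntervalIntegrable f volume ((k:ℝ) * π - π/2) ((k:ℝ) * π + π/2) := by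
  have h := II_neg_pihalf.comp_sub_right ((k:ℝ) * π)
  simp only [f_sub_int] at h
  have e1 : -(π/2) + (k:ℝ) * π = (k:ℝ) * π - π/2 := by ring
  have e2 : π/2 + (k:ℝ) * π = (k:ℝ) * π + π/2 := by ring
  rwa [e1, e2] at h

lemma II_chain (m : ℤ) (n : ℕ) :
    IntervalIntegrable f volume ((m:ℝ) * π - π/2) (((m:ℝ) + n) * π + π/2) := by
  induction n with
  | zero => simpa using II_period m
  | succ n ih =>
    have h2 := II_period (m + n + 1)
    have e1 : ((m:ℝ) + n) * π + π/2 = (↑(m + (n:ℤ) + 1) : ℝ) * π - π/2 := by push_cast; ring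
    have e2 : ((m:ℝ) + ↑(n + 1)) * π + π/2 = (↑(m + (n:ℤ) + 1) : ℝ) * π + π/2 := by
      push_cast; ring
    rw [e2]
    exact (e1 ▸ ih).trans h2

lemma f_II (a b : ℝ) : IntervalIntegrable f volume a b := by
  wlog hab : a ≤ b generalizing a b
  · exact (this b a (le_of_not_ge hab)).symm
  have hpi : (0:ℝ) < π := Real.pi_pos
  set m : ℤ := ⌊a / π⌋ with hm
  set n : ℕ := ⌈(b - a) / π⌉₊ + 1 with hn
  have hfl : (m:ℝ) ≤ a / π := Int.floor_le _
  have hma' : (m:ℝ) * π ≤ a := by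
    have h := mul_le_mul_of_nonneg_right hfl hpi.le
    rwa [div_mul_cancel₀ a hpi.ne'] at h
  have h2 : a < ((m:ℝ) + 1) * π := by
    have h := mul_lt_mul_of_pos_right (Int.lt_floor_add_one (a/π)) hpi
    rwa [div_mul_cancel₀ a hpi.ne'] at h
  have h4 : b - a ≤ (⌈(b - a) / π⌉₊ : ℝ) * π := by
    have h3 := mul_le_mul_of_nonneg_right (Nat.le_ceil ((b-a)/π)) hpi.le
    rwa [div_mul_cancel₀ _ hpi.ne'] at h3
  have hn' : (n:ℝ) * π = (⌈(b-a)/π⌉₊ : ℝ) * π + π := by rw [hn]; push_cast; ring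
  have hma : (m:ℝ) * π - π/2 ≤ a := by linarith
  have hnb : b ≤ ((m:ℝ) + n) * π + π/2 := by nlinarith
  exact (II_chain m n).mono_set (by
    rw [Set.uIcc_of_le hab, Set.uIcc_of_le (by linarith)]
    exact Set.Icc_subset_Icc hma hnb)

lemma lob_eq (θ : ℝ) : lobachevsky θ = -∫ t in (0:ℝ)..θ, f t := rfl

/-- Key monotonicity: moving a pair with fixed sum `s ≤ π` toward the midpoint
increases the sum of Lobachevsky values. -/
lemma pair (s x y : ℝ) (hx : 0 ≤ x) (hxy : x ≤ y) (hy : 2 * y ≤ s) (hs : s ≤ π) :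
    lobachevsky x + lobachevsky (s - x) ≤ lobachevsky y + lobachevsky (s - y) := by
  have h1 : (∫ t in (0:ℝ)..y, f t) = (∫ t in (0:ℝ)..x, f t) + ∫ t in x..y, f t :=
    (integral_add_adjacent_intervals (f_II 0 x) (f_II x y)).symm
  have h2 : (∫ t in (0:ℝ)..(s - x), f t)
      = (∫ t in (0:ℝ)..(s - y), f t) + ∫ t in (s - y)..(s - x), f t :=
    (integral_add_adjacent_intervals (f_II 0 (s - y)) (f_II (s - y) (s - x))).symm
  have hcomp : (∫ u in x..y, f (s - u)) = ∫ t in (s - y)..(s - x), f t :=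
    integral_comp_sub_left f s
  have hII2 : IntervalIntegrable (fun u => f (s - u)) volume x y := by
    have h := (f_II (s - x) (s - y)).comp_sub_left s
    simpa using h
  have hmono : (∫ u in x..y, f u) ≤ ∫ u in x..y, f (s - u) := by
    apply integral_mono_ae_restrict hxy (f_II x y) hII2
    have hxne : ∀ᵐ u ∂(volume.restrict (Set.Icc x y)), u ≠ x := by
      refine ae_restrict_of_ae ?_
      have : (volume : Measure ℝ) {x} = 0 := measure_singleton x
      exact (MeasureTheory.ae_iff.2 (by simpa [Classical.not_not] using this))
    filter_upwards [ae_restrict_mem measurableSet_Icc, hxne] with u hu hune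
    have hu0 : 0 < u := lt_of_le_of_ne (hx.trans hu.1) (Ne.symm (by
      intro h; exact hune (by linarith [hu.1, h] )))
    -- u ∈ (x, y], 0 < u ≤ y ≤ s/2
    have huy : u ≤ y := hu.2
    have hus : u ≤ s - u := by linarith
    have hupi2 : u ≤ π/2 := by linarith
    have hsin_pos : 0 < Real.sin u :=
      Real.sin_pos_of_pos_of_lt_pi hu0 (by linarith [Real.pi_pos])
    have hsin_le : Real.sin u ≤ Real.sin (s - u) := by
      rcases le_total (s - u) (π/2) with h | h
      · exact Real.sin_le_sin_of_le_of_le_pi_div_two (by linarith [Real.pi_pos]) h hus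
      · have hps := Real.sin_pi_sub (s - u)
        rw [← hps]
        exact Real.sin_le_sin_of_le_of_le_pi_div_two (by linarith [Real.pi_pos])
          (by linarith) (by linarith)
    show f u ≤ f (s - u)
    unfold f
    have habs1 : |2 * Real.sin u| = 2 * Real.sin u := abs_of_pos (by linarith)
    have habs2 : |2 * Real.sin (s-u)| = 2 * Real.sin (s-u) := abs_of_pos (by linarith)
    rw [habs1, habs2]
    exact Real.log_le_log (by linarith) (by linarith)
  have goal2 : (∫ u in x..y, f u) ≤ ∫ t in (s - y)..(s - x), f t := by
    rw [← hcomp]; exact hmono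
  simp only [lob_eq]
  linarith
lemma key (a b c : ℝ) (ha : 0 ≤ a) (hb : 0 ≤ b) (hc : 0 ≤ c)
    (ha3 : a ≤ π/3) (hc3 : π/3 ≤ c) (h : a + b + c = π) :
    lobachevsky a + lobachevsky b + lobachevsky c ≤ 3 * lobachevsky (π/3) := by
  have hpi : (0:ℝ) < π := Real.pi_pos
  set s := a + c with hs
  have hsπ : s ≤ π := by linarith
  have step1 : lobachevsky a + lobachevsky c ≤ lobachevsky (π/3) + lobachevsky (s - π/3) := by
    rcases le_total (2 * (π/3)) s with hcase | hcase
    · have := pair s a (π/3) ha ha3 (by linarith) hsπ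
      have e : s - a = c := by rw [hs]; ring
      rw [e] at this; linarith
    · have := pair s a (s - π/3) ha (by linarith) (by linarith) hsπ
      have e : s - a = c := by rw [hs]; ring
      have e2 : s - (s - π/3) = π/3 := by ring
      rw [e, e2] at this; linarith
  have hd0 : 0 ≤ s - π/3 := by linarith
  have hbd : b + (s - π/3) = 2 * (π/3) := by rw [hs]; linarith
  have step2 : lobachevsky b + lobachevsky (s - π/3) ≤ 2 * lobachevsky (π/3) := by
    rcases le_total b (s - π/3) with hcase | hcase
    · have := pair (2 * (π/3)) b (π/3) hb (by linarith) (by linarith) (by linarith)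
      have e : 2 * (π/3) - b = s - π/3 := by linarith
      have e2 : 2 * (π/3) - π/3 = π/3 := by ring
      rw [e, e2] at this; linarith
    · have := pair (2 * (π/3)) (s - π/3) (π/3) hd0 (by linarith) (by linarith) (by linarith)
      have e : 2 * (π/3) - (s - π/3) = b := by linarith
      have e2 : 2 * (π/3) - π/3 = π/3 := by ring
      rw [e, e2] at this; linarith
  linarith

end LobAux

/-- The volume `Λ(α)+Λ(β)+Λ(γ)` of an ideal hyperbolic tetrahedron with dihedral angles
`α, β, γ ≥ 0`, `α+β+γ = π`, is at most `3Λ(π/3)`, the volume of the regular ideal simplex. -/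
theorem ideal_simplex_volume_le (α β γ : ℝ) (hα : 0 ≤ α) (hβ : 0 ≤ β) (hγ : 0 ≤ γ)
    (hsum : α + β + γ = π) :
    lobachevsky α + lobachevsky β + lobachevsky γ ≤ 3 * lobachevsky (π / 3) := by
  rcases le_total α (π/3) with h1 | h1
  · rcases le_total β (π/3) with h2 | h2
    · have h3 : π/3 ≤ γ := by linarith
      exact LobAux.key α β γ hα hβ hγ h1 h3 hsum
    · have := LobAux.key α γ β hα hγ hβ h1 h2 (by linarith)
      linarith
  · rcases le_total β (π/3) with h2 | h2
    · have := LobAux.key β γ α hβ hγ hα h2 h1 (by linarith)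
      linarith
    · have h3 : γ ≤ π/3 := by linarith
      have := LobAux.key γ β α hγ hβ hα h3 h1 (by linarith)
      linarith
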